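/- There is a universal constant C > 0 with the following property. Let M ≥ 10 and let Y be a real-valued random variable such that P(|Y| > s) ≤ e^{−M²s²} for every s > 0. Then for every a ∈ ℝ, 𝔼 φ(Y + a) ≥ φ(a) − C/M. -/

import Mathlib

open MeasureTheory

/-- `φ(r) = e^{−r²/2}`. -/
noncomputable def gphi (r : ℝ) : ℝ := Real.exp (-r ^ 2 / 2)

lemma gphi_hasDerivAt (r : ℝ) :
    HasDerivAt gphi (Real.exp (-r ^ 2 / 2) * (-r)) r := by
  have h1 : HasDerivAt (fun r : ℝ => -r ^ 2 / 2) (-r) r := by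
    have := (hasDerivAt_pow 2 r).neg.div_const 2
    simpa using this.congr_deriv (by ring)
  exact h1.exp

lemma gphi_lipschitz : LipschitzWith 1 gphi := by
  apply lipschitzWith_of_nnnorm_deriv_le
  · intro x; exact (gphi_hasDerivAt x).differentiableAt
  · intro x
    rw [(gphi_hasDerivAt x).deriv, ← NNReal.coe_le_coe, coe_nnnorm, NNReal.coe_one,
      Real.norm_eq_abs, abs_mul, abs_neg, abs_of_pos (Real.exp_pos _)]
    have h1 := Real.add_one_le_exp (x ^ 2 / 2)
    have h2 : Real.exp (-x ^ 2 / 2) * Real.exp (x ^ 2 / 2) = 1 := by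
      rw [← Real.exp_add, show -x ^ 2 / 2 + x ^ 2 / 2 = 0 by ring, Real.exp_zero]
    have h3 : (|x| - 1) ^ 2 ≥ 0 := sq_nonneg _
    have h4 : |x| ^ 2 = x ^ 2 := sq_abs x
    nlinarith [Real.exp_pos (-x ^ 2 / 2), abs_nonneg x]

lemma gphi_nonneg (r : ℝ) : 0 ≤ gphi r := (Real.exp_pos _).le

lemma gphi_le_one (r : ℝ) : gphi r ≤ 1 := by
  rw [gphi, Real.exp_le_one_iff]
  nlinarith [sq_nonneg r]

/-- if `Y` is subgaussian with constant `1/M`, `M ≥ 10`, i.e.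
`P(|Y| > s) ≤ e^{−M²s²}` for all `s > 0`, then `𝔼 φ(Y+a) ≥ φ(a) − C/M` for all `a`. -/
theorem expectation_gphi_shift_lower_bound :
    ∃ C : ℝ, 0 < C ∧ ∀ M : ℝ, 10 ≤ M →
      ∀ μ : Measure ℝ, IsProbabilityMeasure μ →
        (∀ s : ℝ, 0 < s → μ {y | s < |y|} ≤ ENNReal.ofReal (Real.exp (-(M ^ 2 * s ^ 2)))) →
        ∀ a : ℝ, gphi a - C / M ≤ ∫ y, gphi (y + a) ∂μ := by
  refine ⟨1, one_pos, fun M hM μ hμ htail a => ?_⟩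
  have hM0 : (0:ℝ) < M := by linarith
  set g : ℝ → ℝ := fun y => min |y| 1 with hg
  -- measurability / integrability
  have hgm : Measurable g := (measurable_abs).min measurable_const
  have hg_int : Integrable g μ := by
    refine Integrable.mono' (integrable_const 1) hgm.aestronglyMeasurable ?_
    filter_upwards with y
    rw [Real.norm_eq_abs, abs_of_nonneg (le_min (abs_nonneg y) zero_le_one)]
    exact min_le_right _ _
  have hφ_int : Integrable (fun y => gphi (y + a)) μ := by
    refine Integrable.mono' (integrable_const 1)
      ((gphi_lipschitz.continuous.comp (continuous_id.add continuous_const)).aestronglyMeasurable) ?_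
    filter_upwards with y
    rw [Real.norm_eq_abs, abs_of_nonneg (gphi_nonneg _)]
    exact gphi_le_one _
  -- pointwise bound
  have hpt : ∀ y : ℝ, gphi a - g y ≤ gphi (y + a) := by
    intro y
    have h1 : gphi a - gphi (y + a) ≤ |y| := by
      have := gphi_lipschitz.dist_le_mul a (y + a)
      rw [Real.dist_eq, Real.dist_eq] at this
      have : |gphi a - gphi (y + a)| ≤ |y| := by
        simpa [abs_sub_comm] using this
      exact (le_abs_self _).trans this
    have h2 : gphi a - gphi (y + a) ≤ 1 := by
      have := gphi_nonneg (y + a); have := gphi_le_one a; linarith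
    have : gphi a - gphi (y + a) ≤ g y := le_min h1 h2
    linarith
  -- integral of g is small
  have hg_nn : 0 ≤ᵐ[μ] g := by
    filter_upwards with y; exact le_min (abs_nonneg y) zero_le_one
  have hlayer := hg_int.integral_eq_integral_meas_lt hg_nn
  have hbound : ∫ y, g y ∂μ ≤ 1 / M := by
    rw [hlayer]
    have hdom : Integrable (fun t : ℝ => Real.exp (-(M^2) * t ^ 2))
        (volume.restrict (Set.Ioi 0)) :=
      (integrable_exp_neg_mul_sq (by positivity : (0:ℝ) < M^2)).restrict
    have hle : ∫ t in Set.Ioi (0:ℝ), (μ {y | t < g y}).toReal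
        ≤ ∫ t in Set.Ioi (0:ℝ), Real.exp (-(M^2) * t ^ 2) := by
      refine integral_mono_of_nonneg ?_ hdom ?_
      · filter_upwards with t; exact ENNReal.toReal_nonneg
      · filter_upwards [ae_restrict_mem measurableSet_Ioi] with t ht
        have hsub : {y : ℝ | t < g y} ⊆ {y : ℝ | t < |y|} := by
          intro y hy
          exact hy.trans_le (min_le_left |y| 1)
        have h1 : μ {y | t < g y} ≤ ENNReal.ofReal (Real.exp (-(M ^ 2 * t ^ 2))) :=
          (measure_mono hsub).trans (htail t ht)
        have := ENNReal.toReal_le_of_le_ofReal (Real.exp_pos _).le h1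
        simpa [neg_mul] using this
    refine hle.trans ?_
    rw [integral_gaussian_Ioi, Real.sqrt_div Real.pi_pos.le, Real.sqrt_sq hM0.le]
    have hπ : Real.sqrt Real.pi ≤ 2 := by
      have : Real.sqrt Real.pi ≤ Real.sqrt 4 :=
        Real.sqrt_le_sqrt (by nlinarith [Real.pi_le_four])
      simpa [show (4:ℝ) = 2 ^ 2 by norm_num, Real.sqrt_sq (by norm_num : (0:ℝ) ≤ 2)] using this
    rw [div_div, div_le_div_iff₀ (by positivity) hM0]
    nlinarith [Real.sqrt_nonneg Real.pi]
  have hmono : ∫ y, (gphi a - g y) ∂μ ≤ ∫ y, gphi (y + a) ∂μ :=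
    integral_mono (by exact (integrable_const _).sub hg_int) hφ_int (fun y => hpt y)
  rw [integral_sub (integrable_const _) hg_int, integral_const] at hmono
  simp only [probReal_univ, ENNReal.toReal_one, smul_eq_mul, one_mul] at hmono
  have : gphi a - 1 / M ≤ gphi a - ∫ y, g y ∂μ := by linarith
  linarith
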